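/- Suppose K : (0,∞) → [0,∞) is locally integrable, eventually decreasing with K(t) → 0 at infinity, and there exist α ∈ (0,1), C_α > 0, β_α > 0 with |t^α K(t) − C_α| = O(t^{-β_α}) as t → ∞. Then, with γ_α = min{1−α, α·β_α}, one has |ω^{1−α} K_cos(ω) − C_α ∫₀^∞ cos(z)/z^α dz| = O(ω^{γ_α}) as ω → 0⁺. -/

import Mathlib

open MeasureTheory Filter Set Real Asymptotics
open intervalIntegral

set_option maxHeartbeats 1000000 in
lemma osc_bound (f : ℝ → ℝ) (ω a b : ℝ) (hω : 0 < ω) (hab : a ≤ b)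
    (hmono : AntitoneOn f (Ici a)) (hf0 : ∀ t, a ≤ t → 0 ≤ f t)
    (hint : ∀ v, IntegrableOn f (Icc a v)) :
    |∫ t in a..b, f t * Real.cos (ω * t)| ≤ 3 * π / (2 * ω) * f a := by
  set P := π / ω with hPdef
  have hP : 0 < P := div_pos Real.pi_pos hω
  have hωP : ω * P = π := by rw [hPdef]; field_simp
  have hii : ∀ u v, a ≤ u → a ≤ v → IntervalIntegrable f volume u v := by
    intro u v hu hv
    rw [intervalIntegrable_iff]
    exact ((hint (max u v)).mono_set (fun x hx => ⟨le_trans (le_min hu hv) (le_of_lt hx.1),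
      hx.2.trans (le_refl _)⟩))
  have hiic : ∀ u v, a ≤ u → a ≤ v →
      IntervalIntegrable (fun t => f t * Real.cos (ω * t)) volume u v := by
    intro u v hu hv
    exact (hii u v hu hv).mul_continuousOn (Continuous.continuousOn (by continuity))
  have hiis : ∀ u v, a ≤ u → a ≤ v → IntervalIntegrable (fun t => f (t + P)) volume u v := by
    intro u v hu hv
    have := (hii (u + P) (v + P) (by linarith) (by linarith)).comp_add_right P
    simpa using this
  have hiisc : ∀ u v, a ≤ u → a ≤ v →
      IntervalIntegrable (fun t => f (t + P) * Real.cos (ω * t)) volume u v := by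
    intro u v hu hv
    exact (hiis u v hu hv).mul_continuousOn (Continuous.continuousOn (by continuity))
  have hcosshift : ∀ t : ℝ, Real.cos (ω * (t + P)) = -Real.cos (ω * t) := by
    intro t; rw [mul_add, hωP, Real.cos_add_pi]
  have hshift : ∀ u v : ℝ, (∫ t in (u+P)..(v+P), f t * Real.cos (ω * t))
      = - ∫ t in u..v, f (t + P) * Real.cos (ω * t) := by
    intro u v
    rw [← intervalIntegral.integral_comp_add_right (fun t => f t * Real.cos (ω * t)) P]
    rw [← intervalIntegral.integral_neg]
    congr 1; funext t; rw [hcosshift t]; ring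
  set I1 := ∫ t in a..b, f t * Real.cos (ω * t) with hI1
  set I2 := ∫ t in (a+P)..(b+P), f t * Real.cos (ω * t) with hI2
  -- Step A : I1 + I2 = ∫ (f t - f (t+P)) cos
  have hA : I1 + I2 = ∫ t in a..b, (f t - f (t + P)) * Real.cos (ω * t) := by
    rw [hI2, hshift a b]
    rw [show (∫ t in a..b, (f t - f (t + P)) * Real.cos (ω * t))
        = ∫ t in a..b, (f t * Real.cos (ω * t) - f (t + P) * Real.cos (ω * t)) by
      congr 1; funext t; ring]
    rw [intervalIntegral.integral_sub (hiic a b le_rfl hab) (hiisc a b le_rfl hab)]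
    ring
  -- Step B : |I1 + I2| ≤ ∫ (f t - f(t+P))
  have hB : |I1 + I2| ≤ ∫ t in a..b, (f t - f (t + P)) := by
    rw [hA]
    have := intervalIntegral.norm_integral_le_of_norm_le (μ := volume) (a := a) (b := b)
      (f := fun t => (f t - f (t + P)) * Real.cos (ω * t)) (g := fun t => f t - f (t + P))
      hab ?_ ((hii a b le_rfl hab).sub (hiis a b le_rfl hab))
    · have hnn : 0 ≤ ∫ t in a..b, (f t - f (t + P)) :=
        intervalIntegral.integral_nonneg hab (fun u hu => by
          have h1 : a ≤ u := hu.1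
          have h2 : f (u + P) ≤ f u :=
            hmono h1 (show u + P ∈ Ici a by simp only [mem_Ici]; linarith) (by linarith)
          linarith)
      simpa using this
    · filter_upwards with t ht
      have h1 : f (t + P) ≤ f t := hmono (le_of_lt ht.1 : a ≤ t) (by
        have : a ≤ t := le_of_lt ht.1; exact le_trans this (by linarith)) (by linarith)
      have h2 : |Real.cos (ω * t)| ≤ 1 := Real.abs_cos_le_one _
      rw [norm_mul]
      calc ‖f t - f (t + P)‖ * ‖Real.cos (ω * t)‖
          ≤ ‖f t - f (t + P)‖ * 1 := by
            exact mul_le_mul_of_nonneg_left (by simpa using h2) (norm_nonneg _)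
        _ = |f t - f (t + P)| := by rw [mul_one]; rfl
        _ = f t - f (t + P) := abs_of_nonneg (by linarith)
  -- telescoping
  have hadd1 : (∫ t in a..b, f t) + ∫ t in b..(b+P), f t = ∫ t in a..(b+P), f t :=
    intervalIntegral.integral_add_adjacent_intervals (hii a b le_rfl hab)
      (hii b (b+P) hab (by linarith))
  have hadd2 : (∫ t in a..(a+P), f t) + ∫ t in (a+P)..(b+P), f t = ∫ t in a..(b+P), f t :=
    intervalIntegral.integral_add_adjacent_intervals (hii a (a+P) le_rfl (by linarith))
      (hii (a+P) (b+P) (by linarith) (by linarith))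
  have hC : ∫ t in a..b, (f t - f (t + P)) =
      (∫ t in a..(a+P), f t) - ∫ t in b..(b+P), f t := by
    rw [intervalIntegral.integral_sub (hii a b le_rfl hab) (hiis a b le_rfl hab)]
    rw [intervalIntegral.integral_comp_add_right f P]
    linarith
  have hfa0 : 0 ≤ f a := hf0 a le_rfl
  have hD : ∫ t in a..(a+P), f t ≤ P * f a := by
    have := intervalIntegral.integral_mono_on (μ := volume) (a := a) (b := a + P)
      (f := f) (g := fun _ => f a) (by linarith)
      (hii a (a+P) le_rfl (by linarith)) intervalIntegrable_const
      (fun x hx => hmono (le_refl a : a ∈ Ici a) hx.1 hx.1)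
    simpa using this
  have hE : 0 ≤ ∫ t in b..(b+P), f t :=
    intervalIntegral.integral_nonneg (by linarith) (fun u hu => hf0 u (le_trans hab hu.1))
  have hfb : f b ≤ f a := hmono (le_refl a : a ∈ Ici a) hab hab
  have hfb0 : 0 ≤ f b := hf0 b hab
  have hDb : ∫ t in b..(b+P), f t ≤ P * f b := by
    have := intervalIntegral.integral_mono_on (μ := volume) (a := b) (b := b + P)
      (f := f) (g := fun _ => f b) (by linarith)
      (hii b (b+P) hab (by linarith)) intervalIntegrable_const
      (fun x hx => hmono hab (le_trans hab hx.1) hx.1)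
    simpa using this
  -- Step F : I1 - I2 decomposition
  have hadd1c : I1 + (∫ t in b..(b+P), f t * Real.cos (ω * t))
      = ∫ t in a..(b+P), f t * Real.cos (ω * t) :=
    intervalIntegral.integral_add_adjacent_intervals (hiic a b le_rfl hab)
      (hiic b (b+P) hab (by linarith))
  have hadd2c : (∫ t in a..(a+P), f t * Real.cos (ω * t)) + I2
      = ∫ t in a..(b+P), f t * Real.cos (ω * t) :=
    intervalIntegral.integral_add_adjacent_intervals (hiic a (a+P) le_rfl (by linarith))
      (hiic (a+P) (b+P) (by linarith) (by linarith))
  have boundseg : ∀ u v, a ≤ u → u ≤ v →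
      |∫ t in u..v, f t * Real.cos (ω * t)| ≤ ∫ t in u..v, f t := by
    intro u v hu huv
    have := intervalIntegral.norm_integral_le_of_norm_le (μ := volume) (a := u) (b := v)
      (f := fun t => f t * Real.cos (ω * t)) (g := f) huv ?_ (hii u v hu (le_trans hu huv))
    · have hnn : 0 ≤ ∫ t in u..v, f t :=
        intervalIntegral.integral_nonneg huv (fun x hx => hf0 x (le_trans hu hx.1))
      simpa using this
    · filter_upwards with t ht
      have hat : a ≤ t := le_trans hu (le_of_lt ht.1)
      rw [norm_mul]
      calc ‖f t‖ * ‖Real.cos (ω * t)‖ ≤ ‖f t‖ * 1 :=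
            mul_le_mul_of_nonneg_left (by simpa using Real.abs_cos_le_one (ω * t)) (norm_nonneg _)
        _ = |f t| := by rw [mul_one]; rfl
        _ = f t := abs_of_nonneg (hf0 t hat)
  have hF1 : |∫ t in a..(a+P), f t * Real.cos (ω * t)| ≤ P * f a :=
    le_trans (boundseg a (a+P) le_rfl (by linarith)) hD
  have hF2 : |∫ t in b..(b+P), f t * Real.cos (ω * t)| ≤ P * f a :=
    le_trans (boundseg b (b+P) hab (by linarith)) (le_trans hDb
      (mul_le_mul_of_nonneg_left hfb (le_of_lt hP)))
  have hBC : |I1 + I2| ≤ P * f a := by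
    calc |I1 + I2| ≤ ∫ t in a..b, (f t - f (t + P)) := hB
      _ = (∫ t in a..(a+P), f t) - ∫ t in b..(b+P), f t := hC
      _ ≤ P * f a := by linarith
  have hF : |I1 - I2| ≤ 2 * (P * f a) := by
    have : I1 - I2 = (∫ t in a..(a+P), f t * Real.cos (ω * t))
        - ∫ t in b..(b+P), f t * Real.cos (ω * t) := by linarith
    rw [this]
    calc |(∫ t in a..(a+P), f t * Real.cos (ω * t))
        - ∫ t in b..(b+P), f t * Real.cos (ω * t)|
        ≤ |∫ t in a..(a+P), f t * Real.cos (ω * t)|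
          + |∫ t in b..(b+P), f t * Real.cos (ω * t)| := abs_sub _ _
      _ ≤ 2 * (P * f a) := by linarith
  have : |I1| ≤ (3/2) * (P * f a) := by
    have h2 : |2 * I1| ≤ 3 * (P * f a) := by
      calc |2 * I1| = |(I1 + I2) + (I1 - I2)| := by congr 1; ring
        _ ≤ |I1 + I2| + |I1 - I2| := abs_add_le _ _
        _ ≤ 3 * (P * f a) := by linarith
    rw [abs_mul] at h2
    simp only [abs_two] at h2
    linarith
  calc |I1| ≤ (3/2) * (P * f a) := this
    _ = 3 * π / (2 * ω) * f a := by rw [hPdef]; field_simp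

lemma tail_bound (f : ℝ → ℝ) (ω a L : ℝ) (hω : 0 < ω)
    (hmono : AntitoneOn f (Ici a)) (hf0 : ∀ t, a ≤ t → 0 ≤ f t)
    (hint : ∀ v, IntegrableOn f (Icc a v))
    (hL : Tendsto (fun T => ∫ t in a..T, f t * Real.cos (ω * t)) atTop (nhds L)) :
    |L| ≤ 3 * π / (2 * ω) * f a := by
  refine le_of_tendsto hL.abs ?_
  filter_upwards [eventually_ge_atTop a] with T hT
  exact osc_bound f ω a T hω hT hmono hf0 hint

set_option maxHeartbeats 2000000 in
theorem stmt_8 (K : ℝ → ℝ) (α Cα βα : ℝ)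
    (hα : α ∈ Ioo (0:ℝ) 1) (hCα : 0 < Cα) (hβα : 0 < βα)
    (hKnonneg : ∀ t ∈ Ioi (0:ℝ), 0 ≤ K t)
    (hloc : LocallyIntegrableOn K (Ioi 0))
    (hint0 : IntegrableOn K (Ioc 0 1))
    (hdec : ∃ A > (0:ℝ), AntitoneOn K (Ici A))
    (hK0 : Tendsto K atTop (nhds 0))
    (hrate : (fun t => t ^ α * K t - Cα) =O[atTop] fun t => t ^ (-βα))
    (Kcos : ℝ → ℝ)
    (hKcos : ∀ ω > (0:ℝ),
      Tendsto (fun T => ∫ t in (0:ℝ)..T, K t * Real.cos (ω * t)) atTop (nhds (Kcos ω)))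
    (Icos : ℝ)
    (hIcos : Tendsto (fun T => ∫ z in (0:ℝ)..T, Real.cos z / z ^ α) atTop (nhds Icos)) :
    (fun ω => ω ^ (1 - α) * Kcos ω - Cα * Icos) =O[nhdsWithin 0 (Ioi 0)]
      fun ω => ω ^ min (1 - α) (α * βα) := by
  obtain ⟨hα0, hα1⟩ := hα
  obtain ⟨A₁, hA₁pos, hdecA⟩ := hdec
  rw [Asymptotics.isBigO_iff] at hrate
  obtain ⟨c0, hc0⟩ := hrate
  rw [eventually_atTop] at hc0
  obtain ⟨A₀, hA₀⟩ := hc0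
  set c : ℝ := max c0 1 with hcdef
  have hc1 : (1:ℝ) ≤ c := le_max_right _ _
  have hcpos : (0:ℝ) < c := lt_of_lt_of_le one_pos hc1
  set A : ℝ := max (max A₀ A₁) 1 with hAdef
  have hA1 : (1:ℝ) ≤ A := le_max_right _ _
  have hApos : (0:ℝ) < A := lt_of_lt_of_le one_pos hA1
  have hAA₁ : A₁ ≤ A := le_trans (le_max_right _ _) (le_max_left _ _)
  -- rate estimate
  have hrateA : ∀ t, A ≤ t → |t ^ α * K t - Cα| ≤ c * t ^ (-βα) := by
    intro t ht
    have h1 : A₀ ≤ t := le_trans (le_trans (le_max_left _ _) (le_max_left _ _)) ht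
    have h2 := hA₀ t h1
    have htpos : (0:ℝ) < t := lt_of_lt_of_le hApos ht
    have : ‖t ^ (-βα)‖ = t ^ (-βα) := by
      rw [Real.norm_eq_abs, abs_of_nonneg (Real.rpow_nonneg htpos.le _)]
    rw [Real.norm_eq_abs] at h2
    rw [this] at h2
    calc |t ^ α * K t - Cα| ≤ c0 * t ^ (-βα) := h2
      _ ≤ c * t ^ (-βα) := by
          exact mul_le_mul_of_nonneg_right (le_max_left _ _) (Real.rpow_nonneg htpos.le _)
  -- pointwise upper bound on K
  have hKb : ∀ t, A ≤ t → K t ≤ (Cα + c) * t ^ (-α) := by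
    intro t ht
    have htpos : (0:ℝ) < t := lt_of_lt_of_le hApos ht
    have ht1 : (1:ℝ) ≤ t := le_trans hA1 ht
    have h1 : t ^ (-βα) ≤ 1 := Real.rpow_le_one_of_one_le_of_nonpos ht1 (by linarith)
    have h2 : t ^ α * K t ≤ Cα + c := by
      have := (abs_le.1 (hrateA t ht)).2
      nlinarith [Real.rpow_nonneg htpos.le (-βα)]
    have h3 : t ^ (-α) * (t ^ α * K t) ≤ t ^ (-α) * (Cα + c) :=
      mul_le_mul_of_nonneg_left h2 (Real.rpow_nonneg htpos.le _)
    have h4 : t ^ (-α) * t ^ α = 1 := by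
      rw [← Real.rpow_add htpos]; simp
    calc K t = t ^ (-α) * t ^ α * K t := by rw [h4]; ring
      _ = t ^ (-α) * (t ^ α * K t) := by ring
      _ ≤ t ^ (-α) * (Cα + c) := h3
      _ = (Cα + c) * t ^ (-α) := by ring
  -- integrability facts for K
  have hIccK : ∀ u v : ℝ, 0 < u → IntegrableOn K (Icc u v) := by
    intro u v hu
    exact hloc.integrableOn_compact_subset (fun x hx => lt_of_lt_of_le hu hx.1) isCompact_Icc
  have hIocK : ∀ T : ℝ, IntegrableOn K (Ioc 0 T) := by
    intro T
    rcases le_or_gt T 1 with h | h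
    · exact hint0.mono_set (Ioc_subset_Ioc le_rfl h)
    · have : Ioc (0:ℝ) T ⊆ Ioc 0 1 ∪ Icc 1 T := by
        intro x hx
        rcases le_or_gt x 1 with h1 | h1
        · exact Or.inl ⟨hx.1, h1⟩
        · exact Or.inr ⟨h1.le, hx.2⟩
      exact (hint0.union (hIccK 1 T one_pos)).mono_set this
  have hIIK : ∀ u v : ℝ, 0 ≤ u → 0 ≤ v → IntervalIntegrable K volume u v := by
    intro u v hu hv
    rw [intervalIntegrable_iff]
    exact (hIocK (max u v)).mono_set (fun x hx =>
      ⟨lt_of_le_of_lt (le_min hu hv) hx.1, hx.2⟩)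
  have hIIKc : ∀ (ω' u v : ℝ), 0 ≤ u → 0 ≤ v →
      IntervalIntegrable (fun t => K t * Real.cos (ω' * t)) volume u v := by
    intro ω' u v hu hv
    exact (hIIK u v hu hv).mul_continuousOn (Continuous.continuousOn (by continuity))
  -- the modified exponent δ
  set δ : ℝ := if α + βα = 1 then βα*(2+βα)/(2*(1+βα)) else βα with hδdef
  have hδpos : 0 < δ := by
    rw [hδdef]; split
    · positivity
    · exact hβα
  have hδle : δ ≤ βα := by
    rw [hδdef]; split
    · rw [div_le_iff₀ (by positivity)]; nlinarith
    · exact le_rfl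
  have hpne : α + δ ≠ 1 := by
    rw [hδdef]; split
    · rename_i h
      have h1 : 0 < 1 + βα := by linarith
      intro hcontra
      have : βα * (2+βα) = (1 - α) * (2*(1+βα)) := by
        field_simp at hcontra; linarith
      nlinarith
    · rename_i h
      intro hcontra; exact h (by linarith)
  set γ : ℝ := min (1-α) (α*βα) with hγdef
  have hγpos : 0 < γ := lt_min (by linarith) (by positivity)
  have hγle1 : γ ≤ 1 - α := min_le_left _ _
  have hγle2 : γ ≤ α * βα := min_le_right _ _
  have hexp : γ ≤ δ*(1+βα) - βα*(1-α) := by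
    rw [hδdef]; split
    · rename_i h
      have h1 : (0:ℝ) < 1 + βα := by linarith
      refine le_trans hγle2 ?_
      have key : βα*(2+βα)/(2*(1+βα))*(1+βα) = βα*(2+βα)/2 := by
        field_simp
      rw [key]
      nlinarith [sq_nonneg βα]
    · refine le_trans hγle2 ?_
      nlinarith
  -- rate with δ
  have hrateδ : ∀ t, A ≤ t → |t ^ α * K t - Cα| ≤ c * t ^ (-δ) := by
    intro t ht
    refine le_trans (hrateA t ht) (mul_le_mul_of_nonneg_left ?_ hcpos.le)
    exact Real.rpow_le_rpow_of_exponent_le (le_trans hA1 ht) (by linarith)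
  -- nonneg constant CA
  set CA : ℝ := ∫ t in (0:ℝ)..A, K t with hCAdef
  have hCA0 : 0 ≤ CA := by
    rw [hCAdef]
    refine intervalIntegral.integral_nonneg_of_ae_restrict hApos.le ?_
    have h0 : ∀ᵐ (t:ℝ) ∂volume, t ≠ 0 := by
      rw [ae_iff]
      have hset : {t : ℝ | ¬ t ≠ 0} = {0} := by ext t; simp
      rw [hset]
      exact measure_singleton 0
    refine (ae_restrict_iff' measurableSet_Icc).2 ?_
    filter_upwards [h0] with t ht hmem
    exact hKnonneg t (lt_of_le_of_ne hmem.1 (Ne.symm ht))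
  set p : ℝ := α + δ with hpdef
  have hq : 1 - p ≠ 0 := fun h => hpne (by rw [hpdef] at h ⊢; linarith)
  set q : ℝ := |1 - p| with hqdef
  have habs : 0 < q := abs_pos.2 hq
  set ω₀ : ℝ := min 1 (A ^ (-(1+βα)⁻¹)) with hω₀def
  have hω₀pos : 0 < ω₀ := lt_min one_pos (Real.rpow_pos_of_pos hApos _)
  rw [Asymptotics.isBigO_iff]
  refine ⟨3*π/2*(Cα+c) + Cα*(3*π/2) + (CA + Cα*(A^(1-α)/(1-α))) + (c/q)*A^(1-p) + c/q, ?_⟩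
  filter_upwards [Ioo_mem_nhdsGT_of_mem (show (0:ℝ) ∈ Ico 0 ω₀ from ⟨le_rfl, hω₀pos⟩)]
    with ω hωmem
  obtain ⟨hω0, hωlt⟩ := hωmem
  have hω1 : ω ≤ 1 := le_of_lt (lt_of_lt_of_le hωlt (min_le_left _ _))
  have hωA : ω < A ^ (-(1+βα)⁻¹) := lt_of_lt_of_le hωlt (min_le_right _ _)
  set B : ℝ := ω ^ (-(1+βα)) with hBdef
  set Z : ℝ := ω ^ (-βα) with hZdef
  have hBpos : 0 < B := Real.rpow_pos_of_pos hω0 _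
  have hZpos : 0 < Z := Real.rpow_pos_of_pos hω0 _
  have hωB : ω * B = Z := by
    have h1 : ω * B = ω ^ ((1:ℝ) + -(1+βα)) := by
      rw [Real.rpow_add hω0, Real.rpow_one]
    rw [h1, hZdef]; congr 1; ring
  have hAB : A ≤ B := by
    have h2 : (A ^ (-(1+βα)⁻¹)) ^ (-(1+βα)) ≤ ω ^ (-(1+βα)) :=
      Real.rpow_le_rpow_of_nonpos hω0 hωA.le (by linarith)
    have h3 : (A ^ (-(1+βα)⁻¹)) ^ (-(1+βα)) = A := by
      rw [← Real.rpow_mul hApos.le]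
      rw [show (-(1+βα)⁻¹) * (-(1+βα)) = 1 by field_simp]
      exact Real.rpow_one A
    rw [h3] at h2; exact h2
  have hAωZ : A * ω ≤ Z := by
    rw [← hωB]
    calc A * ω ≤ B * ω := mul_le_mul_of_nonneg_right hAB hω0.le
      _ = ω * B := mul_comm _ _
  have hAωpos : 0 < A * ω := mul_pos hApos hω0
  -- Tail 1 : the K-integral from B to ∞
  set JK : ℝ := ∫ t in (0:ℝ)..B, K t * Real.cos (ω * t) with hJKdef
  have htail1 : |Kcos ω - JK| ≤ 3*π/(2*ω) * K B := by
    refine tail_bound K ω B (Kcos ω - JK) hω0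
      (hdecA.mono (fun x hx => le_trans hAA₁ (le_trans hAB hx)))
      (fun t ht => hKnonneg t (lt_of_lt_of_le hBpos ht))
      (fun v => hIccK B v hBpos) ?_
    refine Tendsto.congr' ?_ ((hKcos ω hω0).sub_const JK)
    filter_upwards [eventually_ge_atTop B] with T hT
    have hadd := intervalIntegral.integral_add_adjacent_intervals
      (hIIKc ω 0 B le_rfl hBpos.le) (hIIKc ω B T hBpos.le (le_trans hBpos.le hT))
    rw [← hJKdef] at hadd
    linarith
  have hKB : K B ≤ (Cα + c) * B ^ (-α) := hKb B hAB
  have hKB0 : 0 ≤ K B := hKnonneg B hBpos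
  have hBα : B ^ (-α) = ω ^ ((1+βα)*α) := by
    rw [hBdef, ← Real.rpow_mul hω0.le]
    congr 1; ring
  have hE1 : ω^(1-α) * |Kcos ω - JK| ≤ 3*π/2*(Cα+c) * ω^(α*βα) := by
    have step1 : ω^(1-α) * |Kcos ω - JK|
        ≤ ω^(1-α) * (3*π/(2*ω) * ((Cα + c) * ω ^ ((1+βα)*α))) := by
      refine mul_le_mul_of_nonneg_left ?_ (Real.rpow_nonneg hω0.le _)
      refine le_trans htail1 ?_
      rw [← hBα]
      exact mul_le_mul_of_nonneg_left hKB (by positivity)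
    refine le_trans step1 (le_of_eq ?_)
    have e1 : ω^(1-α) * ω^((1+βα)*α) = ω ^ ((1-α) + (1+βα)*α) := (Real.rpow_add hω0 _ _).symm
    have e2 : ω ^ ((1-α) + (1+βα)*α) / ω = ω ^ ((1-α) + (1+βα)*α - 1) := by
      rw [Real.rpow_sub hω0, Real.rpow_one]
    have e3 : (1-α) + (1+βα)*α - 1 = α*βα := by ring
    calc ω^(1-α) * (3*π/(2*ω) * ((Cα + c) * ω ^ ((1+βα)*α)))
        = 3*π/2*(Cα+c) * (ω^(1-α) * ω^((1+βα)*α) / ω) := by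
          field_simp
      _ = 3*π/2*(Cα+c) * ω^(α*βα) := by rw [e1, e2, e3]
  -- Tail 2 : the model integral from Z to ∞
  have hcongrI : ∀ u v : ℝ, 0 ≤ u → 0 ≤ v →
      (∫ z in u..v, Real.cos z / z ^ α) = ∫ z in u..v, z^(-α) * Real.cos (1 * z) := by
    intro u v hu hv
    refine intervalIntegral.integral_congr (fun z hz => ?_)
    have hz0 : 0 ≤ z := le_trans (le_min hu hv) hz.1
    rcases eq_or_lt_of_le hz0 with h | h
    · rw [← h]
      rw [Real.zero_rpow (ne_of_gt hα0), Real.zero_rpow (by intro hcon; exact (ne_of_gt hα0) (by linarith) : (-α : ℝ) ≠ 0)]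
      simp
    · rw [Real.rpow_neg h.le, one_mul, div_eq_mul_inv, mul_comm]
  have hIIrc : ∀ u v : ℝ, IntervalIntegrable (fun z => z^(-α) * Real.cos (1 * z)) volume u v := by
    intro u v
    exact (intervalIntegral.intervalIntegrable_rpow' (by linarith)).mul_continuousOn
      (Continuous.continuousOn (by continuity))
  set JI : ℝ := ∫ z in (0:ℝ)..Z, Real.cos z / z ^ α with hJIdef
  have hJI' : JI = ∫ z in (0:ℝ)..Z, z^(-α) * Real.cos (1 * z) := hcongrI 0 Z le_rfl hZpos.le
  have htail2 : |Icos - JI| ≤ 3*π/(2*1) * Z ^ (-α) := by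
    refine tail_bound (fun z => z^(-α)) 1 Z (Icos - JI) one_pos ?_ ?_ ?_ ?_
    · intro x hx y hy hxy
      exact Real.rpow_le_rpow_of_nonpos (lt_of_lt_of_le hZpos hx) hxy (by linarith)
    · intro t ht
      exact Real.rpow_nonneg (le_trans hZpos.le ht) _
    · intro v
      refine ContinuousOn.integrableOn_Icc ?_
      intro z hz
      exact (Real.continuousAt_rpow_const z (-α)
        (Or.inl (ne_of_gt (lt_of_lt_of_le hZpos hz.1)))).continuousWithinAt
    · refine Tendsto.congr' ?_ (hIcos.sub_const JI)
      filter_upwards [eventually_ge_atTop (max Z 0)] with T hT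
      have hTZ : Z ≤ T := le_trans (le_max_left _ _) hT
      have hT0 : (0:ℝ) ≤ T := le_trans (le_max_right _ _) hT
      have hadd := intervalIntegral.integral_add_adjacent_intervals
        (hIIrc 0 Z) (hIIrc Z T)
      rw [hcongrI 0 T le_rfl hT0, hJI']
      linarith
  have hZα : Z ^ (-α) = ω ^ (βα * α) := by
    rw [hZdef, ← Real.rpow_mul hω0.le]
    congr 1; ring
  have hE2 : Cα * |Icos - JI| ≤ Cα*(3*π/2) * ω^(α*βα) := by
    have : Cα * |Icos - JI| ≤ Cα * (3*π/(2*1) * Z^(-α)) :=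
      mul_le_mul_of_nonneg_left htail2 hCα.le
    refine le_trans this (le_of_eq ?_)
    rw [hZα, show βα * α = α * βα by ring]
    ring
  -- substituted kernel integrability
  have hIIKsub : ∀ u v : ℝ, 0 ≤ u → 0 ≤ v →
      IntervalIntegrable (fun z => K (z/ω)) volume u v := by
    intro u v hu hv
    have h1 := (hIIK (u/ω) (v/ω) (by positivity) (by positivity)).comp_mul_left (c := ω⁻¹)
    have h2 : (fun x => K (ω⁻¹ * x)) = fun z => K (z/ω) := by
      funext z; rw [← div_eq_inv_mul]
    rw [h2] at h1
    have h3 : u/ω/ω⁻¹ = u := by field_simp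
    have h4 : v/ω/ω⁻¹ = v := by field_simp
    rwa [h3, h4] at h1
  set φ : ℝ → ℝ := fun z => (ω^(-α) * K (z/ω) - Cα * z^(-α)) * Real.cos z with hφdef
  have hIIφ : ∀ u v : ℝ, 0 ≤ u → 0 ≤ v → IntervalIntegrable φ volume u v := by
    intro u v hu hv
    have h1 : IntervalIntegrable (fun z => ω^(-α) * K (z/ω) - Cα * z^(-α)) volume u v :=
      ((hIIKsub u v hu hv).const_mul _).sub
        ((intervalIntegral.intervalIntegrable_rpow' (by linarith)).const_mul _)
    exact h1.mul_continuousOn (Continuous.continuousOn (by continuity))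
  -- change of variables
  have hcv : JK = ω⁻¹ * ∫ z in (0:ℝ)..Z, K (z/ω) * Real.cos z := by
    calc JK = ∫ t in (0:ℝ)..B, (fun z => K (z/ω) * Real.cos z) (ω*t) := by
          rw [hJKdef]
          refine intervalIntegral.integral_congr (fun t _ => ?_)
          simp only
          rw [mul_comm ω t, mul_div_assoc, div_self (ne_of_gt hω0), mul_one, mul_comm t ω]
      _ = ω⁻¹ • ∫ z in (ω*0)..(ω*B), K (z/ω) * Real.cos z :=
          intervalIntegral.integral_comp_mul_left (fun z => K (z/ω) * Real.cos z) hω0.ne'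
      _ = ω⁻¹ * ∫ z in (0:ℝ)..Z, K (z/ω) * Real.cos z := by
          rw [mul_zero, hωB, smul_eq_mul]
  have hcvA : (∫ z in (0:ℝ)..(A*ω), K (z/ω)) = ω * CA := by
    have h5 : CA = ω⁻¹ * ∫ z in (0:ℝ)..(ω*A), K (z/ω) := by
      calc CA = ∫ t in (0:ℝ)..A, (fun z => K (z/ω)) (ω*t) := by
            rw [hCAdef]
            refine intervalIntegral.integral_congr (fun t _ => ?_)
            simp only
            rw [mul_comm ω t, mul_div_assoc, div_self (ne_of_gt hω0), mul_one]
        _ = ω⁻¹ • ∫ z in (ω*0)..(ω*A), K (z/ω) :=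
            intervalIntegral.integral_comp_mul_left (fun z => K (z/ω)) hω0.ne'
        _ = ω⁻¹ * ∫ z in (0:ℝ)..(ω*A), K (z/ω) := by rw [mul_zero, smul_eq_mul]
    rw [show A * ω = ω * A from mul_comm _ _, h5]
    field_simp
  have hωpow : ω^(1-α) * ω⁻¹ = ω^(-α) := by
    rw [show ω⁻¹ = ω ^ (-1 : ℝ) from (Real.rpow_neg_one ω).symm, ← Real.rpow_add hω0]
    congr 1; ring
  have hIIa : IntervalIntegrable (fun z => K (z/ω) * Real.cos z) volume 0 Z :=
    (hIIKsub 0 Z le_rfl hZpos.le).mul_continuousOn (Continuous.continuousOn (by continuity))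
  have hmain : ω^(1-α) * JK - Cα * JI = ∫ z in (0:ℝ)..Z, φ z := by
    rw [hcv, hJI', ← mul_assoc, hωpow]
    rw [← intervalIntegral.integral_const_mul, ← intervalIntegral.integral_const_mul]
    rw [← intervalIntegral.integral_sub (hIIa.const_mul _) ((hIIrc 0 Z).const_mul _)]
    refine intervalIntegral.integral_congr (fun z _ => ?_)
    simp only [hφdef, one_mul]
    ring
  have hsplit : (∫ z in (0:ℝ)..Z, φ z)
      = (∫ z in (0:ℝ)..(A*ω), φ z) + ∫ z in (A*ω)..Z, φ z :=
    (intervalIntegral.integral_add_adjacent_intervals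
      (hIIφ 0 (A*ω) le_rfl hAωpos.le) (hIIφ (A*ω) Z hAωpos.le hZpos.le)).symm
  -- E3 : the piece near zero
  have hrpowint : (∫ z in (0:ℝ)..(A*ω), z^(-α)) = (A*ω)^(1-α)/(1-α) := by
    rw [integral_rpow (Or.inl (by linarith : (-1:ℝ) < -α))]
    rw [Real.zero_rpow (by intro hcon; linarith : (-α + 1 : ℝ) ≠ 0), sub_zero]
    rw [show (-α + 1 : ℝ) = 1 - α by ring]
  have hE3 : |∫ z in (0:ℝ)..(A*ω), φ z| ≤ (CA + Cα*(A^(1-α)/(1-α))) * ω^(1-α) := by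
    have hIIg1 : IntervalIntegrable (fun z => ω^(-α) * K (z/ω)) volume 0 (A*ω) :=
      (hIIKsub 0 (A*ω) le_rfl hAωpos.le).const_mul _
    have hIIg2 : IntervalIntegrable (fun z => Cα * z^(-α)) volume 0 (A*ω) :=
      (intervalIntegral.intervalIntegrable_rpow' (by linarith)).const_mul _
    have hb := intervalIntegral.norm_integral_le_of_norm_le (μ := volume) (a := 0) (b := A*ω)
      (f := φ) (g := fun z => ω^(-α) * K (z/ω) + Cα * z^(-α)) hAωpos.le ?_ (hIIg1.add hIIg2)
    · have e0 : ω^(-α) * ω = ω^(1-α) := by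
        have h := Real.rpow_add hω0 (-α) 1
        rw [Real.rpow_one, show (-α + 1 : ℝ) = 1 - α by ring] at h
        exact h.symm
      have hval : (∫ t in (0:ℝ)..(A*ω), (ω^(-α) * K (t/ω) + Cα * t^(-α)))
          = CA * ω^(1-α) + Cα*(A^(1-α)/(1-α)) * ω^(1-α) := by
        rw [intervalIntegral.integral_add hIIg1 hIIg2,
          intervalIntegral.integral_const_mul, intervalIntegral.integral_const_mul,
          hcvA, hrpowint]
        have e1 : ω^(-α) * (ω * CA) = CA * ω^(1-α) := by
          rw [show ω^(-α) * (ω * CA) = (ω^(-α) * ω) * CA by ring, e0]; ring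
        have e2 : (A*ω)^(1-α) = A^(1-α) * ω^(1-α) := Real.mul_rpow hApos.le hω0.le
        rw [e1, e2]
        field_simp
      have hvpos : 0 ≤ CA * ω^(1-α) + Cα*(A^(1-α)/(1-α)) * ω^(1-α) := by
        have h1 : (0:ℝ) ≤ Cα*(A^(1-α)/(1-α)) := by
          apply mul_nonneg hCα.le
          apply div_nonneg (Real.rpow_nonneg hApos.le _) (by linarith)
        exact add_nonneg (mul_nonneg hCA0 (Real.rpow_nonneg hω0.le _))
          (mul_nonneg h1 (Real.rpow_nonneg hω0.le _))
      rw [hval] at hb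
      rw [Real.norm_eq_abs] at hb
      refine le_trans hb (le_of_eq ?_)
      ring
    · filter_upwards with z hz
      have hz0 : 0 < z := hz.1
      have hK0' : 0 ≤ K (z/ω) := hKnonneg _ (div_pos hz0 hω0)
      have h1 : ‖φ z‖ ≤ |ω^(-α) * K (z/ω) - Cα * z^(-α)| := by
        rw [hφdef]
        simp only [norm_mul, Real.norm_eq_abs]
        calc |ω^(-α) * K (z/ω) - Cα * z^(-α)| * |Real.cos z|
            ≤ |ω^(-α) * K (z/ω) - Cα * z^(-α)| * 1 :=
              mul_le_mul_of_nonneg_left (Real.abs_cos_le_one z) (abs_nonneg _)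
          _ = |ω^(-α) * K (z/ω) - Cα * z^(-α)| := mul_one _
      refine le_trans h1 ?_
      have h2 : |ω^(-α) * K (z/ω) - Cα * z^(-α)|
          ≤ |ω^(-α) * K (z/ω)| + |Cα * z^(-α)| := abs_sub _ _
      have h3 : |ω^(-α) * K (z/ω)| = ω^(-α) * K (z/ω) :=
        abs_of_nonneg (mul_nonneg (Real.rpow_nonneg hω0.le _) hK0')
      have h4 : |Cα * z^(-α)| = Cα * z^(-α) :=
        abs_of_nonneg (mul_nonneg hCα.le (Real.rpow_nonneg hz0.le _))
      rw [h3, h4] at h2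
      exact h2
  -- E4 : the middle piece
  have hE4 : |∫ z in (A*ω)..Z, φ z|
      ≤ (c/q)*A^(1-p) * ω^(1-α) + (c/q) * ω^(δ*(1+βα) - βα*(1-α)) := by
    have hIIg : IntervalIntegrable (fun z => c * ω^δ * z^(-p)) volume (A*ω) Z :=
      (intervalIntegral.intervalIntegrable_rpow
        (Or.inr (by
          rw [uIcc_of_le hAωZ]
          intro hcon
          exact absurd hcon.1 (not_le_of_gt hAωpos)))).const_mul _
    have hb := intervalIntegral.norm_integral_le_of_norm_le (μ := volume) (a := A*ω) (b := Z)
      (f := φ) (g := fun z => c * ω^δ * z^(-p)) hAωZ ?_ hIIg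
    · have hint : (∫ z in (A*ω)..Z, z^(-p))
          = (Z^(-p+1) - (A*ω)^(-p+1))/(-p+1) := by
        refine integral_rpow (Or.inr ⟨?_, ?_⟩)
        · intro hcon
          apply hq
          have : p = 1 := by linarith [neg_eq_iff_eq_neg.1 hcon]
          linarith
        · rw [uIcc_of_le hAωZ]
          intro hcon
          exact absurd hcon.1 (not_le_of_gt hAωpos)
      have hZnn : 0 ≤ Z^(1-p) := Real.rpow_nonneg hZpos.le _
      have hAωnn : 0 ≤ (A*ω)^(1-p) := Real.rpow_nonneg hAωpos.le _
      have hintbd : |∫ z in (A*ω)..Z, z^(-p)| ≤ (Z^(1-p) + (A*ω)^(1-p))/q := by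
        rw [hint, abs_div, show (-p+1 : ℝ) = 1 - p by ring, ← hqdef]
        refine (div_le_div_iff_of_pos_right habs).2 ?_
        refine le_trans (abs_sub _ _) ?_
        rw [abs_of_nonneg hZnn, abs_of_nonneg hAωnn]
      have hgval : |∫ z in (A*ω)..Z, c * ω^δ * z^(-p)|
          ≤ c * ω^δ * ((Z^(1-p) + (A*ω)^(1-p))/q) := by
        rw [intervalIntegral.integral_const_mul, abs_mul]
        rw [abs_of_nonneg (by positivity : (0:ℝ) ≤ c * ω^δ)]
        exact mul_le_mul_of_nonneg_left hintbd (by positivity)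
      refine le_trans (le_trans hb (le_trans (le_abs_self _) hgval)) ?_
      -- now pure rpow algebra
      have hZp : Z^(1-p) = ω^(-βα*(1-p)) := by
        rw [hZdef, ← Real.rpow_mul hω0.le]
      have hAωp : (A*ω)^(1-p) = A^(1-p) * ω^(1-p) := Real.mul_rpow hApos.le hω0.le
      have e1 : ω^δ * ω^(-βα*(1-p)) = ω^(δ*(1+βα) - βα*(1-α)) := by
        rw [← Real.rpow_add hω0]
        congr 1
        rw [hpdef]
        ring
      have e2 : ω^δ * ω^(1-p) = ω^(1-α) := by
        rw [← Real.rpow_add hω0]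
        congr 1
        rw [hpdef]
        ring
      rw [hZp, hAωp]
      rw [show c * ω^δ * ((ω^(-βα*(1-p)) + A^(1-p) * ω^(1-p))/q)
          = (c/q) * (ω^δ * ω^(-βα*(1-p))) + (c/q)*A^(1-p) * (ω^δ * ω^(1-p)) by
        field_simp]
      rw [e1, e2]
      linarith
    · filter_upwards with z hz
      have hz0 : 0 < z := lt_trans hAωpos hz.1
      have htA : A ≤ z/ω := by
        rw [le_div_iff₀ hω0]
        exact hz.1.le
      have hrate' := hrateδ (z/ω) htA
      have h1 : z^(-α) * (z/ω)^α = ω^(-α) := by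
        rw [Real.div_rpow hz0.le hω0.le, Real.rpow_neg hz0.le]
        field_simp
        rw [← Real.rpow_add hω0]
        simp
      have key : ω^(-α) * K (z/ω) - Cα * z^(-α)
          = z^(-α) * ((z/ω)^α * K (z/ω) - Cα) := by
        rw [mul_sub, ← mul_assoc, h1]
        ring
      have h2 : ‖φ z‖ ≤ |ω^(-α) * K (z/ω) - Cα * z^(-α)| := by
        rw [hφdef]
        simp only [norm_mul, Real.norm_eq_abs]
        calc |ω^(-α) * K (z/ω) - Cα * z^(-α)| * |Real.cos z|
            ≤ |ω^(-α) * K (z/ω) - Cα * z^(-α)| * 1 :=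
              mul_le_mul_of_nonneg_left (Real.abs_cos_le_one z) (abs_nonneg _)
          _ = _ := mul_one _
      refine le_trans h2 ?_
      rw [key, abs_mul, abs_of_nonneg (Real.rpow_nonneg hz0.le _)]
      have h3 : z^(-α) * |(z/ω)^α * K (z/ω) - Cα| ≤ z^(-α) * (c * (z/ω)^(-δ)) :=
        mul_le_mul_of_nonneg_left hrate' (Real.rpow_nonneg hz0.le _)
      refine le_trans h3 (le_of_eq ?_)
      rw [Real.div_rpow hz0.le hω0.le, Real.rpow_neg hω0.le δ, div_inv_eq_mul]
      rw [show z^(-α) * (c * (z^(-δ) * ω^δ)) = c * ω^δ * (z^(-α) * z^(-δ)) by ring]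
      rw [← Real.rpow_add hz0]
      congr 1
      rw [hpdef]
      ring
  -- final assembly
  have b1 : ω^(α*βα) ≤ ω^γ := Real.rpow_le_rpow_of_exponent_ge hω0 hω1 hγle2
  have b2 : ω^(1-α) ≤ ω^γ := Real.rpow_le_rpow_of_exponent_ge hω0 hω1 hγle1
  have b3 : ω^(δ*(1+βα) - βα*(1-α)) ≤ ω^γ := Real.rpow_le_rpow_of_exponent_ge hω0 hω1 hexp
  have hD : ω^(1-α) * Kcos ω - Cα * Icos
      = ω^(1-α) * (Kcos ω - JK) - Cα * (Icos - JI)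
        + ((∫ z in (0:ℝ)..(A*ω), φ z) + ∫ z in (A*ω)..Z, φ z) := by
    rw [← hsplit, ← hmain]
    ring
  simp only [Real.norm_eq_abs]
  rw [hD, abs_of_nonneg (Real.rpow_nonneg hω0.le γ)]
  have tri : |ω^(1-α) * (Kcos ω - JK) - Cα * (Icos - JI)
        + ((∫ z in (0:ℝ)..(A*ω), φ z) + ∫ z in (A*ω)..Z, φ z)|
      ≤ |ω^(1-α) * (Kcos ω - JK)| + |Cα * (Icos - JI)|
        + (|∫ z in (0:ℝ)..(A*ω), φ z| + |∫ z in (A*ω)..Z, φ z|) := by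
    calc |ω^(1-α) * (Kcos ω - JK) - Cα * (Icos - JI)
          + ((∫ z in (0:ℝ)..(A*ω), φ z) + ∫ z in (A*ω)..Z, φ z)|
        ≤ |ω^(1-α) * (Kcos ω - JK) - Cα * (Icos - JI)|
          + |(∫ z in (0:ℝ)..(A*ω), φ z) + ∫ z in (A*ω)..Z, φ z| := abs_add_le _ _
      _ ≤ (|ω^(1-α) * (Kcos ω - JK)| + |Cα * (Icos - JI)|)
          + (|∫ z in (0:ℝ)..(A*ω), φ z| + |∫ z in (A*ω)..Z, φ z|) :=
          add_le_add (abs_sub _ _) (abs_add_le _ _)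
  have ha1 : |ω^(1-α) * (Kcos ω - JK)| = ω^(1-α) * |Kcos ω - JK| := by
    rw [abs_mul, abs_of_nonneg (Real.rpow_nonneg hω0.le _)]
  have ha2 : |Cα * (Icos - JI)| = Cα * |Icos - JI| := by
    rw [abs_mul, abs_of_nonneg hCα.le]
  have hC1 : (0:ℝ) ≤ 3*π/2*(Cα+c) := by positivity
  have hC2 : (0:ℝ) ≤ Cα*(3*π/2) := by positivity
  have hC3 : (0:ℝ) ≤ CA + Cα*(A^(1-α)/(1-α)) := by
    have h1 : (0:ℝ) ≤ Cα*(A^(1-α)/(1-α)) :=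
      mul_nonneg hCα.le (div_nonneg (Real.rpow_nonneg hApos.le _) (by linarith))
    linarith
  have hC4 : (0:ℝ) ≤ (c/q)*A^(1-p) :=
    mul_nonneg (by positivity) (Real.rpow_nonneg hApos.le _)
  have hC5 : (0:ℝ) ≤ c/q := by positivity
  have m1 : 3*π/2*(Cα+c) * ω^(α*βα) ≤ 3*π/2*(Cα+c) * ω^γ := mul_le_mul_of_nonneg_left b1 hC1
  have m2 : Cα*(3*π/2) * ω^(α*βα) ≤ Cα*(3*π/2) * ω^γ := mul_le_mul_of_nonneg_left b1 hC2
  have m3 : (CA + Cα*(A^(1-α)/(1-α))) * ω^(1-α) ≤ (CA + Cα*(A^(1-α)/(1-α))) * ω^γ :=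
    mul_le_mul_of_nonneg_left b2 hC3
  have m4 : (c/q)*A^(1-p) * ω^(1-α) ≤ (c/q)*A^(1-p) * ω^γ := mul_le_mul_of_nonneg_left b2 hC4
  have m5 : (c/q) * ω^(δ*(1+βα) - βα*(1-α)) ≤ (c/q) * ω^γ := mul_le_mul_of_nonneg_left b3 hC5
  refine le_trans tri ?_
  rw [ha1, ha2]
  linarith [hE1, hE2, hE3, hE4]
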